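/- Let D̄ be the closed unit disk in ℝ². For each unit vector u ∈ ℝ², define the meridian γ_u : ℝ → {0,1} × D̄, periodic with period 4, by γ_u(t) = (0, (1 − t)·u) for t ∈ [0, 2) and γ_u(t) = (1, (t − 3)·u) for t ∈ [2, 4). Then: (1) each γ_u is a half-geodesic of period 4 of the double of D̄ with respect to the pseudometric D; and (2) if u and v are unit vectors with v ≠ u and v ≠ −u, then the images of γ_u and γ_v are distinct. In particular, the doubled disk admits infinitely many half-geodesics with pairwise distinct images. -/

import Mathlib

open Real

noncomputable section

/-- The Euclidean plane. -/
abbrev E2 : Type := EuclideanSpace ℝ (Fin 2)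

/-- The pseudometric of the double of a plane set `P`: two points on the same
face are at their Euclidean distance, while points on opposite faces are at
the infimum over boundary points `z ∈ ∂P` of `‖x - z‖ + ‖z - y‖`. -/
def doubleDist (P : Set E2) (p q : Bool × E2) : ℝ :=
  if p.1 = q.1 then ‖p.2 - q.2‖
  else sInf ((fun z => ‖p.2 - z‖ + ‖z - q.2‖) '' frontier P)

/-- The closed unit disk in the plane. -/
def unitDisk : Set E2 := Metric.closedBall 0 1

/-- The meridian of the doubled unit disk in the direction of the unit vector
`u`, periodic of period `4`: on `[0, 2)` it crosses the top face from `u`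
to `-u` through the center, and on `[2, 4)` it returns across the bottom
face. -/
def diskMeridian (u : E2) (t : ℝ) : Bool × E2 :=
  let t' := t - 4 * (⌊t / 4⌋ : ℝ)
  if t' < 2 then (false, (1 - t') • u) else (true, (t' - 3) • u)

lemma frontier_unitDisk : frontier unitDisk = Metric.sphere (0:E2) 1 := by
  simp [unitDisk, frontier_closedBall]

lemma key_inf (u : E2) (hu : ‖u‖ = 1) (a b : ℝ) (ha : |a| ≤ 1) (hb : |b| ≤ 1) :
    sInf ((fun z => ‖a • u - z‖ + ‖z - b • u‖) '' frontier unitDisk) = 2 - |a + b| := by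
  have ha1 : a ≤ 1 := le_of_abs_le ha
  have ha1' : -1 ≤ a := neg_le_of_abs_le ha
  have hb1 : b ≤ 1 := le_of_abs_le hb
  have hb1' : -1 ≤ b := neg_le_of_abs_le hb
  rw [frontier_unitDisk]
  apply IsLeast.csInf_eq
  constructor
  · rcases le_or_gt 0 (a + b) with h | h
    · refine ⟨u, by simp [hu], ?_⟩
      have e1 : a • u - u = (a - 1) • u := by rw [sub_smul, one_smul]
      have e2 : u - b • u = (1 - b) • u := by rw [sub_smul, one_smul]
      simp only [e1, e2, norm_smul, Real.norm_eq_abs, hu, mul_one]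
      rw [abs_of_nonpos (by linarith), abs_of_nonneg (by linarith), abs_of_nonneg h]
      ring
    · refine ⟨-u, by simp [hu], ?_⟩
      have e1 : a • u - (-u) = (a + 1) • u := by rw [add_smul, one_smul]; abel
      have e2 : (-u) - b • u = (-1 - b) • u := by rw [sub_smul, neg_one_smul]
      simp only [e1, e2, norm_smul, Real.norm_eq_abs, hu, mul_one]
      rw [abs_of_nonneg (by linarith), abs_of_nonpos (by linarith), abs_of_neg h]
      ring
  · rintro y ⟨z, hz, rfl⟩
    have hz1 : ‖z‖ = 1 := by simpa using hz
    set c : ℝ := inner ℝ u z with hc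
    have hcle : |c| ≤ 1 := by
      have h := abs_real_inner_le_norm u z
      rw [hu, hz1, mul_one] at h
      exact h
    have hc1 : c ≤ 1 := le_of_abs_le hcle
    have hc1' : -1 ≤ c := neg_le_of_abs_le hcle
    have hx2 : ‖a • u - z‖^2 = a^2 - 2*(a*c) + 1 := by
      rw [norm_sub_sq_real, real_inner_smul_left, norm_smul, Real.norm_eq_abs, hu, hz1,
        mul_one, sq_abs, ← hc]
      ring
    have hy2 : ‖z - b • u‖^2 = 1 - 2*(b*c) + b^2 := by
      rw [norm_sub_sq_real, real_inner_smul_right, norm_smul, Real.norm_eq_abs, hu, hz1,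
        mul_one, sq_abs, real_inner_comm, ← hc]
      ring
    have hc2 : c^2 ≤ 1 := by nlinarith
    have ha2 : a^2 ≤ 1 := by nlinarith
    have hb2 : b^2 ≤ 1 := by nlinarith
    have hac : 0 ≤ 1 - a*c := by nlinarith [sq_nonneg (a - c), sq_nonneg (a + c)]
    have hbc : 0 ≤ 1 - b*c := by nlinarith [sq_nonneg (b - c), sq_nonneg (b + c)]
    have hsq1 : (1 - a*c)^2 ≤ ‖a • u - z‖^2 := by
      rw [hx2]; nlinarith [mul_nonneg (sq_nonneg a) (sub_nonneg.mpr hc2)]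
    have hsq2 : (1 - b*c)^2 ≤ ‖z - b • u‖^2 := by
      rw [hy2]; nlinarith [mul_nonneg (sq_nonneg b) (sub_nonneg.mpr hc2)]
    have h1 : 1 - a*c ≤ ‖a • u - z‖ := by
      have := Real.sqrt_le_sqrt hsq1
      rwa [Real.sqrt_sq hac, Real.sqrt_sq (norm_nonneg _)] at this
    have h2 : 1 - b*c ≤ ‖z - b • u‖ := by
      have := Real.sqrt_le_sqrt hsq2
      rwa [Real.sqrt_sq hbc, Real.sqrt_sq (norm_nonneg _)] at this
    have h3 : (a + b) * c ≤ |a + b| := by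
      calc (a + b) * c ≤ |(a + b) * c| := le_abs_self _
        _ = |a + b| * |c| := abs_mul _ _
        _ ≤ |a + b| * 1 := by exact mul_le_mul_of_nonneg_left hcle (abs_nonneg _)
        _ = |a + b| := mul_one _
    simp only []
    linarith [h3]

lemma diskMeridian_def (u : E2) (t : ℝ) :
    diskMeridian u t = if t - 4 * (⌊t / 4⌋ : ℝ) < 2 then (false, (1 - (t - 4 * (⌊t / 4⌋ : ℝ))) • u)
      else (true, ((t - 4 * (⌊t / 4⌋ : ℝ)) - 3) • u) := rfl

lemma floor_div_four_eq_zero {t : ℝ} (h0 : 0 ≤ t) (h4 : t < 4) : ⌊t / 4⌋ = 0 := by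
  rw [Int.floor_eq_zero_iff, Set.mem_Ico]
  constructor <;> linarith

lemma diskMeridian_lo (u : E2) {t : ℝ} (h0 : 0 ≤ t) (h2 : t < 2) :
    diskMeridian u t = (false, (1 - t) • u) := by
  rw [diskMeridian_def, floor_div_four_eq_zero h0 (by linarith)]
  norm_num [h2]

lemma diskMeridian_hi (u : E2) {t : ℝ} (h2 : 2 ≤ t) (h4 : t < 4) :
    diskMeridian u t = (true, (t - 3) • u) := by
  rw [diskMeridian_def, floor_div_four_eq_zero (by linarith) h4]
  rw [if_neg (by push_cast; linarith)]
  norm_num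

lemma diskMeridian_add_int (u : E2) (t : ℝ) (n : ℤ) :
    diskMeridian u (t + 4 * n) = diskMeridian u t := by
  have hdiv : (t + 4 * (n : ℝ)) / 4 = t / 4 + n := by ring
  have key : t + 4 * (n : ℝ) - 4 * (⌊(t + 4 * (n : ℝ)) / 4⌋ : ℝ) = t - 4 * (⌊t / 4⌋ : ℝ) := by
    rw [hdiv, Int.floor_add_intCast]
    push_cast
    ring
  rw [diskMeridian_def, diskMeridian_def, key]

lemma doubleDist_symm (P : Set E2) (p q : Bool × E2) :
    doubleDist P p q = doubleDist P q p := by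
  unfold doubleDist
  by_cases h : p.1 = q.1
  · rw [if_pos h, if_pos h.symm, norm_sub_rev]
  · rw [if_neg h, if_neg (Ne.symm h)]
    congr 1
    have : (fun z => ‖p.2 - z‖ + ‖z - q.2‖) = fun z => ‖q.2 - z‖ + ‖z - p.2‖ := by
      funext z
      rw [norm_sub_rev p.2 z, norm_sub_rev z q.2, add_comm]
    rw [this]

lemma doubleDist_core (u : E2) (hu : ‖u‖ = 1) (s t : ℝ) (ht0 : 0 ≤ t) (ht4 : t < 4)
    (hts : t ≤ s) (hst : s ≤ t + 2) :
    doubleDist unitDisk (diskMeridian u s) (diskMeridian u t) = s - t := by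
  rcases lt_or_ge t 2 with h2 | h2
  · -- t ∈ [0,2), so s < 4
    have hs4 : s < 4 := by linarith
    rcases lt_or_ge s 2 with hs2 | hs2
    · -- both on face false
      rw [diskMeridian_lo u ht0 h2, diskMeridian_lo u (by linarith) hs2]
      unfold doubleDist
      rw [if_pos rfl]
      have : (1 - s) • u - (1 - t) • u = (t - s) • u := by
        rw [← sub_smul]; ring_nf
      rw [this, norm_smul, Real.norm_eq_abs, hu, mul_one, abs_of_nonpos (by linarith)]
      ring
    · -- s on face true, t on face false
      rw [diskMeridian_lo u ht0 h2, diskMeridian_hi u hs2 hs4]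
      unfold doubleDist
      rw [if_neg (by simp)]
      simp only
      rw [key_inf u hu (s - 3) (1 - t) (abs_le.mpr ⟨by linarith, by linarith⟩)
        (abs_le.mpr ⟨by linarith, by linarith⟩)]
      rw [abs_of_nonpos (by linarith)]
      ring
  · -- t ∈ [2,4)
    rcases lt_or_ge s 4 with hs4 | hs4
    · -- both on face true
      rw [diskMeridian_hi u h2 ht4, diskMeridian_hi u (by linarith) hs4]
      unfold doubleDist
      rw [if_pos rfl]
      have : (s - 3) • u - (t - 3) • u = (s - t) • u := by
        rw [← sub_smul]; ring_nf
      rw [this, norm_smul, Real.norm_eq_abs, hu, mul_one, abs_of_nonneg (by linarith)]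
    · -- s ≥ 4: s wraps to s - 4 ∈ [0, 2), face false; t on face true
      have hwrap : diskMeridian u s = diskMeridian u (s - 4) := by
        have := diskMeridian_add_int u (s - 4) 1
        norm_num at this
        rw [← this]
      rw [hwrap, diskMeridian_lo u (by linarith) (by linarith), diskMeridian_hi u h2 ht4]
      unfold doubleDist
      rw [if_neg (by simp)]
      simp only
      have e : (1 - (s - 4)) = (5 - s) := by ring
      rw [e, key_inf u hu (5 - s) (t - 3) (abs_le.mpr ⟨by linarith, by linarith⟩)
        (abs_le.mpr ⟨by linarith, by linarith⟩)]
      rw [abs_of_nonneg (by linarith)]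
      ring

lemma doubleDist_half (u : E2) (hu : ‖u‖ = 1) (s t : ℝ) (hts : t ≤ s) (hst : s ≤ t + 2) :
    doubleDist unitDisk (diskMeridian u s) (diskMeridian u t) = s - t := by
  set n : ℤ := ⌊t / 4⌋ with hn
  have ht' : diskMeridian u t = diskMeridian u (t - 4 * n) := by
    rw [← diskMeridian_add_int u (t - 4 * n) n]; ring_nf
  have hs' : diskMeridian u s = diskMeridian u (s - 4 * n) := by
    rw [← diskMeridian_add_int u (s - 4 * n) n]; ring_nf
  have h0 : 0 ≤ t - 4 * (n : ℝ) := by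
    have := Int.floor_le (t / 4)
    rw [← hn] at this
    linarith
  have h4 : t - 4 * (n : ℝ) < 4 := by
    have := Int.lt_floor_add_one (t / 4)
    rw [← hn] at this
    linarith
  rw [ht', hs', doubleDist_core u hu _ _ h0 h4 (by linarith) (by linarith)]
  ring

/-- Each meridian `γ_u` of the doubled closed unit disk is a half-geodesic of
period `4` for the pseudometric `D`, and meridians in non-parallel unit
directions have distinct images; hence the doubled disk admits infinitely
many half-geodesics with pairwise distinct images. -/
theorem doubled_disk_meridians_are_half_geodesics :
    (∀ u : E2, ‖u‖ = 1 →
      (∀ t : ℝ, doubleDist unitDisk (diskMeridian u (t + 4)) (diskMeridian u t) = 0) ∧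
      (∀ s t : ℝ, |s - t| ≤ 2 →
        doubleDist unitDisk (diskMeridian u s) (diskMeridian u t) = |s - t|)) ∧
    (∀ u v : E2, ‖u‖ = 1 → ‖v‖ = 1 → v ≠ u → v ≠ -u →
      Set.range (diskMeridian u) ≠ Set.range (diskMeridian v)) := by
  constructor
  · intro u hu
    constructor
    · intro t
      have : diskMeridian u (t + 4) = diskMeridian u t := by
        have := diskMeridian_add_int u t 1
        norm_num at this
        exact this
      rw [this]
      unfold doubleDist
      rw [if_pos rfl]
      simp
    · intro s t hst
      rcases le_total t s with h | h
      · rw [abs_of_nonneg (by linarith)] at hst ⊢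
        exact doubleDist_half u hu s t h (by linarith)
      · rw [abs_of_nonpos (by linarith)] at hst ⊢
        rw [doubleDist_symm]
        rw [doubleDist_half u hu t s h (by linarith)]
        ring
  · intro u v hu hv hvu hvnu hEq
    have hmem : (false, u) ∈ Set.range (diskMeridian u) := by
      refine ⟨0, ?_⟩
      rw [diskMeridian_lo u le_rfl (by norm_num)]
      norm_num
    rw [hEq] at hmem
    obtain ⟨t, ht⟩ := hmem
    rw [diskMeridian_def] at ht
    set t' : ℝ := t - 4 * (⌊t / 4⌋ : ℝ) with ht'
    have h0 : 0 ≤ t' := by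
      have := Int.floor_le (t / 4)
      rw [ht']; linarith
    split_ifs at ht with h
    · have h1 : (1 - t') • v = u := by
        have := (Prod.mk.injEq _ _ _ _).mp ht
        exact this.2
      have hnorm : |1 - t'| = 1 := by
        have := congrArg norm h1
        rw [norm_smul, Real.norm_eq_abs, hv, mul_one, hu] at this
        exact this
      have : 1 - t' = 1 := by
        rcases abs_cases (1 - t') with ⟨h', _⟩ | ⟨h', _⟩ <;> [linarith; linarith]
      have ht0 : t' = 0 := by linarith
      rw [ht0] at h1
      norm_num at h1
      exact hvu h1
    · simp at ht
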